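/- Let A be a commutative ring, I a set, R = A[(X_i)_{i∈I}] the polynomial ring, G a commutative group, ψ : ℤ^(⊕I) → G a surjective group homomorphism, H ≤ G a subgroup of finite index, and S = R_(H). For every finitely generated monomial ideal 𝔞 ⊆ R one has Γ_{𝔞_(H)} = Γ_{⌊𝔞⌋_H} = Γ_{⌊𝔞⌋_(H)} as torsion functors over S; i.e., for every S-module M and every x ∈ M, the three conditions '∃ n, (𝔞_(H))^n ⊆ Ann_S(x)', '∃ n, (⌊𝔞⌋_H)^n ⊆ Ann_S(x)' and '∃ n, (⌊𝔞⌋_(H))^n ⊆ Ann_S(x)' are equivalent. (Proposition 2.30.) -/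

import Mathlib

set_option synthInstance.maxHeartbeats 1000000
set_option maxHeartbeats 1000000

open MvPolynomial

/-- `suppInd μ` is the characteristic function of the support of `μ`,
so that `X^(suppInd μ) = ∏_{i : μ i > 0} X i`. -/
noncomputable def suppInd {I : Type v} (μ : I →₀ ℕ) : I →₀ ℕ :=
  μ.mapRange (fun n => if n = 0 then 0 else 1) (by simp)

/-- The canonical embedding `ℕ^(⊕I) → ℤ^(⊕I)`. -/
noncomputable def natToInt {I : Type v} (μ : I →₀ ℕ) : I →₀ ℤ :=
  Finsupp.mapRange (Nat.cast : ℕ → ℤ) Nat.cast_zero μ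

/-- A monomial ideal of `A[(X_i)_{i ∈ I}]` is an ideal generated by a set of monomials. -/
def IsMonomialIdeal {A : Type u} [CommRing A] {I : Type v}
    (𝔞 : Ideal (MvPolynomial I A)) : Prop :=
  ∃ E : Set (I →₀ ℕ), 𝔞 = Ideal.span ((fun μ => monomial μ (1 : A)) '' E)

/-- `⌊𝔞⌋` is the ideal generated by the monomials `X^(suppInd μ)` for all monomials
`X^μ ∈ 𝔞`. -/
noncomputable def mvFloor {A : Type u} [CommRing A] {I : Type v}
    (𝔞 : Ideal (MvPolynomial I A)) : Ideal (MvPolynomial I A) :=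
  Ideal.span {f | ∃ μ : I →₀ ℕ, monomial μ (1 : A) ∈ 𝔞 ∧ f = monomial (suppInd μ) (1 : A)}

/-- The degree restriction `S = R_(H)` of `R = A[(X_i)_{i ∈ I}]` (graded via
`ψ : ℤ^(⊕I) → G`) to a subgroup `H ≤ G`: the `A`-subalgebra of `R` generated by the
monomials `X^μ` whose degree `ψ(μ)` lies in `H`. -/
noncomputable def degRestrict (A : Type u) [CommRing A] {I : Type v} {G : Type w} [AddCommGroup G]
    (ψ : (I →₀ ℤ) →+ G) (H : AddSubgroup G) : Subalgebra A (MvPolynomial I A) :=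
  Algebra.adjoin A {f | ∃ μ : I →₀ ℕ, ψ (natToInt μ) ∈ H ∧ f = monomial μ (1 : A)}

/-- The degree restriction `𝔠_(H) = 𝔠 ∩ S` of an ideal `𝔠` of `R`, as an ideal of
`S = R_(H)`. -/
noncomputable def idealRestrict {A : Type u} [CommRing A] {I : Type v} {G : Type w} [AddCommGroup G]
    (ψ : (I →₀ ℤ) →+ G) (H : AddSubgroup G) (𝔠 : Ideal (MvPolynomial I A)) :
    Ideal (degRestrict A ψ H) :=
  Ideal.comap (degRestrict A ψ H).val 𝔠

/-- `E(𝔞)`: the set of minimal elements of `{μ ∈ ℕ^(⊕I) | X^μ ∈ 𝔞}` with respect to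
the componentwise order. -/
def Emin {A : Type u} [CommRing A] {I : Type v} (𝔞 : Ideal (MvPolynomial I A)) :
    Set (I →₀ ℕ) :=
  {μ | monomial μ (1 : A) ∈ 𝔞 ∧ ∀ ν : I →₀ ℕ, monomial ν (1 : A) ∈ 𝔞 → ν ≤ μ → ν = μ}

/-- `m_μ`: the least `m ∈ ℕ` such that `X^(m • suppInd μ) ∈ 𝔞_(H) = 𝔞 ∩ S`. -/
noncomputable def mdeg {A : Type u} [CommRing A] {I : Type v} {G : Type w} [AddCommGroup G]
    (ψ : (I →₀ ℤ) →+ G) (H : AddSubgroup G) (𝔞 : Ideal (MvPolynomial I A))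
    (μ : I →₀ ℕ) : ℕ :=
  sInf {m : ℕ | monomial (m • suppInd μ) (1 : A) ∈ 𝔞 ∧
    monomial (m • suppInd μ) (1 : A) ∈ degRestrict A ψ H}

/-- `⌊𝔞⌋_H`: the ideal of `S = R_(H)` generated by the monomials `X^(m_μ • suppInd μ)`
for `μ ∈ E(𝔞)`. -/
noncomputable def floorH {A : Type u} [CommRing A] {I : Type v} {G : Type w} [AddCommGroup G]
    (ψ : (I →₀ ℤ) →+ G) (H : AddSubgroup G) (𝔞 : Ideal (MvPolynomial I A)) :
    Ideal (degRestrict A ψ H) :=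
  Ideal.span {s | ∃ μ ∈ Emin 𝔞,
    (s : MvPolynomial I A) = monomial (mdeg ψ H 𝔞 μ • suppInd μ) (1 : A)}


section AuxLemmas

open Pointwise

variable {A : Type u} [CommRing A] {I : Type v} {G : Type w} [AddCommGroup G]

lemma suppInd_apply (μ : I →₀ ℕ) (i : I) : suppInd μ i = if μ i = 0 then 0 else 1 :=
  Finsupp.mapRange_apply

lemma suppInd_le (μ : I →₀ ℕ) : suppInd μ ≤ μ := by
  rw [Finsupp.le_def]; intro i
  simp only [suppInd_apply]; split_ifs <;> omega

lemma suppInd_mono {μ ν : I →₀ ℕ} (h : μ ≤ ν) : suppInd μ ≤ suppInd ν := by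
  rw [Finsupp.le_def] at h ⊢
  intro i
  have := h i
  simp only [suppInd_apply]; split_ifs <;> omega

lemma le_smul_suppInd (μ : I →₀ ℕ) {m : ℕ} (hm : ∀ i, μ i ≤ m) : μ ≤ m • suppInd μ := by
  rw [Finsupp.le_def]; intro i
  have := hm i
  simp only [Finsupp.smul_apply, suppInd_apply, smul_eq_mul]
  split_ifs <;> omega

lemma smul_le_smul_finsupp {m k : ℕ} {τ σ : I →₀ ℕ} (h1 : m ≤ k) (h2 : τ ≤ σ) :
    m • τ ≤ k • σ := by
  rw [Finsupp.le_def] at h2 ⊢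
  intro i
  simp only [Finsupp.smul_apply, smul_eq_mul]
  exact Nat.mul_le_mul h1 (h2 i)

lemma natToInt_apply (μ : I →₀ ℕ) (i : I) : natToInt μ i = (μ i : ℤ) :=
  Finsupp.mapRange_apply

lemma natToInt_add (μ ν : I →₀ ℕ) : natToInt (μ + ν) = natToInt μ + natToInt ν := by
  ext i; simp [natToInt_apply]

lemma natToInt_smul (m : ℕ) (μ : I →₀ ℕ) : natToInt (m • μ) = m • natToInt μ := by
  ext i; simp [natToInt_apply, mul_comm]

lemma natToInt_zero : natToInt (0 : I →₀ ℕ) = 0 := by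
  ext i; simp [natToInt_apply]

/-- The set of polynomials all of whose monomials have degree in `H`, as a subalgebra. -/
noncomputable def degSub (ψ : (I →₀ ℤ) →+ G) (H : AddSubgroup G) :
    Subalgebra A (MvPolynomial I A) where
  carrier := {f | ∀ μ ∈ f.support, ψ (natToInt μ) ∈ H}
  add_mem' := by
    classical
    intro a b ha hb μ hμ
    rcases Finset.mem_union.1 (MvPolynomial.support_add hμ) with h | h
    exacts [ha μ h, hb μ h]
  mul_mem' := by
    classical
    intro a b ha hb μ hμ
    rcases Finset.mem_add.1 (support_mul _ _ hμ) with ⟨x, hx, y, hy, rfl⟩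
    rw [natToInt_add, map_add]
    exact H.add_mem (ha x hx) (hb y hy)
  zero_mem' := by intro μ hμ; simp at hμ
  one_mem' := by
    intro μ hμ
    rw [show (1 : MvPolynomial I A) = monomial 0 1 by simp] at hμ
    have := support_monomial_subset hμ
    rw [Finset.mem_singleton] at this
    subst this
    rw [natToInt_zero, map_zero]
    exact H.zero_mem
  algebraMap_mem' := by
    intro a μ hμ
    rw [MvPolynomial.algebraMap_eq, C_apply] at hμ
    have := support_monomial_subset hμ
    rw [Finset.mem_singleton] at this
    subst this
    rw [natToInt_zero, map_zero]
    exact H.zero_mem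

lemma mem_degRestrict_iff (ψ : (I →₀ ℤ) →+ G) (H : AddSubgroup G) {f : MvPolynomial I A} :
    f ∈ degRestrict A ψ H ↔ ∀ μ ∈ f.support, ψ (natToInt μ) ∈ H := by
  constructor
  · intro hf
    have h1 : degRestrict A ψ H ≤ degSub (A := A) ψ H := by
      rw [degRestrict]
      apply Algebra.adjoin_le
      rintro g ⟨μ, hμ, rfl⟩ ν hν
      have := support_monomial_subset hν
      rw [Finset.mem_singleton] at this
      subst this
      exact hμ
    exact h1 hf
  · intro hf
    rw [degRestrict]
    nth_rewrite 1 [as_sum f]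
    apply Subalgebra.sum_mem
    intro μ hμ
    have he : monomial μ (coeff μ f) = (coeff μ f) • monomial μ (1 : A) := by
      rw [MvPolynomial.smul_monomial, smul_eq_mul, mul_one]
    rw [he]
    have hg : monomial μ (1 : A) ∈
        {f : MvPolynomial I A | ∃ ν : I →₀ ℕ, ψ (natToInt ν) ∈ H ∧ f = monomial ν (1 : A)} :=
      ⟨μ, hf μ hμ, rfl⟩
    exact Subalgebra.smul_mem _ (Algebra.subset_adjoin hg) _

lemma monomial_one_mem_degRestrict_iff [Nontrivial A] (ψ : (I →₀ ℤ) →+ G) (H : AddSubgroup G)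
    {ν : I →₀ ℕ} :
    monomial ν (1 : A) ∈ degRestrict A ψ H ↔ ψ (natToInt ν) ∈ H := by
  classical
  rw [mem_degRestrict_iff]
  constructor
  · intro h
    exact h ν (by rw [MvPolynomial.mem_support_iff, coeff_monomial, if_pos rfl]; exact one_ne_zero)
  · intro h μ hμ
    have := support_monomial_subset hμ
    rw [Finset.mem_singleton] at this
    subst this
    exact h

lemma monomial_mem_of_le {𝔠 : Ideal (MvPolynomial I A)} {μ ν : I →₀ ℕ}
    (h : monomial μ (1 : A) ∈ 𝔠) (hle : μ ≤ ν) : monomial ν (1 : A) ∈ 𝔠 := by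
  have e : monomial ν (1 : A) = monomial (ν - μ) (1 : A) * monomial μ 1 := by
    rw [monomial_mul, one_mul, tsub_add_cancel_of_le hle]
  rw [e]
  exact Ideal.mul_mem_left _ _ h

lemma prod_monomial_one {ι : Type*} (s : Finset ι) (d : ι → (I →₀ ℕ)) :
    (∏ i ∈ s, monomial (d i) (1 : A)) = monomial (∑ i ∈ s, d i) 1 := by
  classical
  induction s using Finset.induction with
  | empty => simp
  | @insert _ _ h ih => rw [Finset.prod_insert h, Finset.sum_insert h, ih, monomial_mul, one_mul]

/-- total degree of an exponent vector -/
private def degg (μ : I →₀ ℕ) : ℕ := μ.sum fun _ n => n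

private lemma degg_add (a b : I →₀ ℕ) : degg (a + b) = degg a + degg b :=
  Finsupp.sum_add_index' (fun _ => rfl) (fun _ _ _ => rfl)

private lemma apply_le_degg (μ : I →₀ ℕ) (i : I) : μ i ≤ degg μ := by
  by_cases h : μ i = 0
  · omega
  · exact Finset.single_le_sum (fun _ _ => Nat.zero_le _) (Finsupp.mem_support_iff.2 h)

private lemma degg_strict {μ ν : I →₀ ℕ} (hle : ν ≤ μ) (hne : ν ≠ μ) : degg ν < degg μ := by
  have e : ν + (μ - ν) = μ := add_tsub_cancel_of_le hle
  have h2 : degg ν + degg (μ - ν) = degg μ := by rw [← degg_add, e]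
  have h3 : μ - ν ≠ 0 := by
    intro h0
    exact hne (by rw [← e, h0, add_zero])
  have h4 : 0 < degg (μ - ν) := by
    rcases Finsupp.ne_iff.1 h3 with ⟨i, hi⟩
    simp only [Finsupp.coe_zero, Pi.zero_apply] at hi
    have := apply_le_degg (μ - ν) i
    omega
  omega

lemma exists_emin_le {𝔞 : Ideal (MvPolynomial I A)} {μ : I →₀ ℕ}
    (h : monomial μ (1 : A) ∈ 𝔞) : ∃ ε ∈ Emin 𝔞, ε ≤ μ := by
  suffices H : ∀ n (μ : I →₀ ℕ), degg μ ≤ n → monomial μ (1 : A) ∈ 𝔞 → ∃ ε ∈ Emin 𝔞, ε ≤ μ from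
    H (degg μ) μ le_rfl h
  intro n
  induction n with
  | zero =>
    intro μ hd hμ
    have hμ0 : μ = 0 := by
      ext i
      have := apply_le_degg μ i
      simp only [Finsupp.coe_zero, Pi.zero_apply]
      omega
    subst hμ0
    refine ⟨0, ⟨hμ, fun ν hν hle => ?_⟩, le_rfl⟩
    exact nonpos_iff_eq_zero.1 hle
  | succ n ih =>
    intro μ hd hμ
    by_cases hmin : ∀ ν, monomial ν (1 : A) ∈ 𝔞 → ν ≤ μ → ν = μ
    · exact ⟨μ, ⟨hμ, hmin⟩, le_rfl⟩
    · push_neg at hmin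
      obtain ⟨ν, hν, hle, hne⟩ := hmin
      have hlt := degg_strict hle hne
      obtain ⟨ε, hε, hεle⟩ := ih ν (by omega) hν
      exact ⟨ε, hε, le_trans hεle hle⟩

lemma mdeg_spec (ψ : (I →₀ ℤ) →+ G) (H : AddSubgroup G) (hH : H.FiniteIndex)
    (𝔞 : Ideal (MvPolynomial I A)) {μ : I →₀ ℕ} (hμ : monomial μ (1 : A) ∈ 𝔞) :
    monomial (mdeg ψ H 𝔞 μ • suppInd μ) (1 : A) ∈ 𝔞 ∧
      monomial (mdeg ψ H 𝔞 μ • suppInd μ) (1 : A) ∈ degRestrict A ψ H := by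
  classical
  have hne : {m : ℕ | monomial (m • suppInd μ) (1 : A) ∈ 𝔞 ∧
      monomial (m • suppInd μ) (1 : A) ∈ degRestrict A ψ H}.Nonempty := by
    refine ⟨H.index * (μ.support.sup μ), ?_, ?_⟩
    · apply monomial_mem_of_le hμ
      apply le_smul_suppInd
      intro i
      by_cases h : μ i = 0
      · omega
      · have h1 : μ i ≤ μ.support.sup μ := Finset.le_sup (Finsupp.mem_support_iff.2 h)
        have h2 : 1 ≤ H.index := Nat.one_le_iff_ne_zero.2 hH.index_ne_zero
        have := Nat.le_mul_of_pos_left (μ.support.sup μ) (by omega : 0 < H.index)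
        omega
    · rw [mem_degRestrict_iff]
      intro ν hν
      have := support_monomial_subset hν
      rw [Finset.mem_singleton] at this
      subst this
      rw [natToInt_smul, map_nsmul, mul_smul]
      exact AddSubgroup.nsmul_index_mem H _
  exact Nat.sInf_mem hne

lemma span_monomials_self {𝔞 : Ideal (MvPolynomial I A)} (h : IsMonomialIdeal 𝔞) :
    𝔞 = Ideal.span ((fun μ => monomial μ (1 : A)) '' {μ | monomial μ (1 : A) ∈ 𝔞}) := by
  obtain ⟨E, hE⟩ := h
  apply le_antisymm
  · conv_lhs => rw [hE]
    apply Ideal.span_mono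
    apply Set.image_mono
    intro μ hμ
    show monomial μ (1 : A) ∈ 𝔞
    rw [hE]
    exact Ideal.subset_span ⟨μ, hμ, rfl⟩
  · rw [Ideal.span_le]
    rintro f ⟨μ, hμ, rfl⟩
    exact hμ

lemma exists_finite_gen [Nontrivial A] {𝔞 : Ideal (MvPolynomial I A)}
    (h : IsMonomialIdeal 𝔞) (hfg : 𝔞.FG) :
    ∃ F : Finset (I →₀ ℕ), (∀ μ ∈ F, monomial μ (1 : A) ∈ 𝔞) ∧
      𝔞 = Ideal.span ((fun μ => monomial μ (1 : A)) '' ↑F) := by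
  classical
  obtain ⟨s, hs⟩ := hfg
  have hDspan := span_monomials_self h
  have hmem : ∀ f ∈ s, ∃ T : Finset (MvPolynomial I A),
      ↑T ⊆ (fun μ => monomial μ (1 : A)) '' {μ | monomial μ (1 : A) ∈ 𝔞} ∧
        f ∈ Ideal.span (T : Set (MvPolynomial I A)) := by
    intro f hf
    apply Submodule.mem_span_finite_of_mem_span
    show f ∈ Ideal.span ((fun μ => monomial μ (1 : A)) '' {μ | monomial μ (1 : A) ∈ 𝔞})
    rw [← hDspan, ← hs]
    exact Ideal.subset_span hf
  choose T hT1 hT2 using hmem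
  set Tall : Finset (MvPolynomial I A) := s.attach.biUnion (fun f => T f.1 f.2) with hTall
  have hTallsub : (Tall : Set (MvPolynomial I A)) ⊆
      (fun μ => monomial μ (1 : A)) '' {μ | monomial μ (1 : A) ∈ 𝔞} := by
    intro p hp
    rw [Finset.mem_coe, hTall, Finset.mem_biUnion] at hp
    obtain ⟨f, _, hpf⟩ := hp
    exact hT1 _ _ hpf
  have hspan : 𝔞 = Ideal.span (Tall : Set (MvPolynomial I A)) := by
    apply le_antisymm
    · rw [← hs, Ideal.span_le]
      intro f hf
      refine Ideal.span_mono ?_ (hT2 f hf)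
      intro p hp
      rw [Finset.mem_coe] at hp ⊢
      rw [hTall, Finset.mem_biUnion]
      exact ⟨⟨f, hf⟩, Finset.mem_attach _ _, hp⟩
    · rw [Ideal.span_le]
      intro p hp
      obtain ⟨μ, hμ, rfl⟩ := hTallsub hp
      exact hμ
  have hsub2 : (Tall : Set (MvPolynomial I A)) ⊆
      Set.range (fun μ : I →₀ ℕ => monomial μ (1 : A)) := by
    intro p hp
    obtain ⟨μ, _, rfl⟩ := hTallsub hp
    exact ⟨μ, rfl⟩
  have hfin : ((fun μ : I →₀ ℕ => monomial μ (1 : A)) ⁻¹' ↑Tall).Finite :=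
    Set.Finite.preimage ((monomial_left_injective (one_ne_zero (α := A))).injOn) Tall.finite_toSet
  refine ⟨hfin.toFinset, ?_, ?_⟩
  · intro μ hμ
    rw [Set.Finite.mem_toFinset] at hμ
    have hp : monomial μ (1 : A) ∈ (Tall : Set (MvPolynomial I A)) := hμ
    rw [hspan]
    exact Ideal.subset_span hp
  · rw [hspan]
    congr 1
    rw [Set.Finite.coe_toFinset]
    exact (Set.image_preimage_eq_of_subset hsub2).symm

lemma ideal_span_pow {R : Type*} [CommRing R] (s : Set R) (n : ℕ) :
    Ideal.span s ^ n = Ideal.span (s ^ n) := by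
  induction n with
  | zero =>
    rw [pow_zero, pow_zero, show (1 : Set R) = {1} from rfl, Ideal.span_singleton_one,
      Ideal.one_eq_top]
  | succ n ih => rw [pow_succ, pow_succ, ih, Ideal.span_mul_span']

lemma comap_pow_le {R S : Type*} [CommRing R] [CommRing S] {F : Type*} [FunLike F R S]
    [RingHomClass F R S] (f : F) (J : Ideal S) (n : ℕ) :
    (Ideal.comap f J) ^ n ≤ Ideal.comap f (J ^ n) := by
  intro x hx
  rw [Ideal.mem_comap]
  have h1 : f x ∈ Ideal.map f ((Ideal.comap f J) ^ n) := Ideal.mem_map_of_mem f hx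
  rw [Ideal.map_pow] at h1
  exact Ideal.pow_right_mono Ideal.map_comap_le n h1

lemma torsion_aux {S : Type*} [CommRing S] {P Q J : Ideal S} (k : ℕ) (h : P ^ k ≤ Q)
    (hQ : ∃ n, Q ^ n ≤ J) : ∃ n, P ^ n ≤ J := by
  obtain ⟨n, hn⟩ := hQ
  exact ⟨k * n, by rw [pow_mul]; exact le_trans (Ideal.pow_right_mono h n) hn⟩

lemma mem_restrict_span_iff (ψ : (I →₀ ℤ) →+ G) (H : AddSubgroup G) {T : Set (I →₀ ℕ)}
    (hT : ∀ ν ∈ T, ψ (natToInt ν) ∈ H) (x : degRestrict A ψ H) :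
    x ∈ Ideal.span {s : degRestrict A ψ H | ∃ ν ∈ T,
        (s : MvPolynomial I A) = monomial ν (1 : A)} ↔
      (x : MvPolynomial I A) ∈ Ideal.span ((fun ν => monomial ν (1 : A)) '' T) := by
  constructor
  · intro hx
    have h1 := Ideal.mem_map_of_mem (degRestrict A ψ H).val hx
    rw [Ideal.map_span] at h1
    refine Ideal.span_mono ?_ h1
    rintro _ ⟨s, ⟨ν, hν, hs⟩, rfl⟩
    exact ⟨ν, hν, hs.symm⟩
  · intro hx
    classical
    have hsupp𝔞 := mem_ideal_span_monomial_image.1 hx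
    have hsuppH : ∀ μ ∈ (x : MvPolynomial I A).support, ψ (natToInt μ) ∈ H :=
      (mem_degRestrict_iff ψ H).1 x.2
    have hmemS : ∀ μ ∈ (x : MvPolynomial I A).support,
        monomial μ (coeff μ (x : MvPolynomial I A)) ∈ degRestrict A ψ H := by
      intro μ hμ
      rw [mem_degRestrict_iff]
      intro ρ hρ
      have := support_monomial_subset hρ
      rw [Finset.mem_singleton] at this
      rw [this]
      exact hsuppH μ hμ
    have hxe : x = ∑ μ ∈ (x : MvPolynomial I A).support.attach,
        (⟨monomial μ.1 (coeff μ.1 (x : MvPolynomial I A)), hmemS μ.1 μ.2⟩ :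
          degRestrict A ψ H) := by
      apply Subtype.ext
      rw [AddSubmonoidClass.coe_finset_sum]
      rw [Finset.sum_attach _ (fun μ => monomial μ (coeff μ (x : MvPolynomial I A)))]
      exact as_sum _
    rw [hxe]
    apply Ideal.sum_mem
    intro μ hμ
    obtain ⟨ν, hνT, hνle⟩ := hsupp𝔞 μ.1 μ.2
    have hgenmem : monomial ν (1 : A) ∈ degRestrict A ψ H := by
      rw [mem_degRestrict_iff]
      intro ρ hρ
      have := support_monomial_subset hρ
      rw [Finset.mem_singleton] at this
      rw [this]
      exact hT ν hνT
    have hcof : monomial (μ.1 - ν) (coeff μ.1 (x : MvPolynomial I A)) ∈ degRestrict A ψ H := by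
      rw [mem_degRestrict_iff]
      intro ρ hρ
      have := support_monomial_subset hρ
      rw [Finset.mem_singleton] at this
      rw [this]
      have e : natToInt ν + natToInt (μ.1 - ν) = natToInt μ.1 := by
        rw [← natToInt_add, add_tsub_cancel_of_le hνle]
      have e2 : ψ (natToInt (μ.1 - ν)) = ψ (natToInt μ.1) - ψ (natToInt ν) := by
        rw [← e, map_add]
        abel
      rw [e2]
      exact AddSubgroup.sub_mem H (hsuppH μ.1 μ.2) (hT ν hνT)
    have he : (⟨monomial μ.1 (coeff μ.1 (x : MvPolynomial I A)), hmemS μ.1 μ.2⟩ :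
        degRestrict A ψ H) =
        ⟨monomial (μ.1 - ν) (coeff μ.1 (x : MvPolynomial I A)), hcof⟩ *
          ⟨monomial ν (1 : A), hgenmem⟩ := by
      apply Subtype.ext
      rw [MulMemClass.coe_mul]
      show monomial μ.1 (coeff μ.1 (x : MvPolynomial I A)) =
        monomial (μ.1 - ν) (coeff μ.1 (x : MvPolynomial I A)) * monomial ν 1
      rw [monomial_mul, mul_one, tsub_add_cancel_of_le hνle]
    rw [he]
    exact Ideal.mul_mem_left _ _ (Ideal.subset_span ⟨ν, hνT, rfl⟩)

lemma floorH_eq_comap [Nontrivial A] (ψ : (I →₀ ℤ) →+ G) (H : AddSubgroup G)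
    (hH : H.FiniteIndex) (𝔞 : Ideal (MvPolynomial I A)) :
    floorH ψ H 𝔞 = Ideal.comap (degRestrict A ψ H).val
      (Ideal.span ((fun ν => monomial ν (1 : A)) ''
        {ν | ∃ μ ∈ Emin 𝔞, ν = mdeg ψ H 𝔞 μ • suppInd μ})) := by
  ext x
  have hval : (degRestrict A ψ H).val x = (x : MvPolynomial I A) := rfl
  rw [Ideal.mem_comap, hval]
  have hT : ∀ ν ∈ {ν | ∃ μ ∈ Emin 𝔞, ν = mdeg ψ H 𝔞 μ • suppInd μ},
      ψ (natToInt ν) ∈ H := by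
    rintro ν ⟨μ, hμ, rfl⟩
    have h2 := (mdeg_spec ψ H hH 𝔞 hμ.1).2
    rwa [monomial_one_mem_degRestrict_iff] at h2
  have hiff := mem_restrict_span_iff (A := A) ψ H hT x
  rw [← hiff, floorH]
  have hset : {s : degRestrict A ψ H | ∃ μ ∈ Emin 𝔞,
      (s : MvPolynomial I A) = monomial (mdeg ψ H 𝔞 μ • suppInd μ) (1 : A)} =
      {s : degRestrict A ψ H | ∃ ν ∈ {ν | ∃ μ ∈ Emin 𝔞, ν = mdeg ψ H 𝔞 μ • suppInd μ},
        (s : MvPolynomial I A) = monomial ν (1 : A)} := by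
    ext s
    constructor
    · rintro ⟨μ, hμ, hs⟩
      exact ⟨_, ⟨μ, hμ, rfl⟩, hs⟩
    · rintro ⟨ν, ⟨μ, hμ, rfl⟩, hs⟩
      exact ⟨μ, hμ, hs⟩
  rw [hset]

lemma mvFloor_pow_le [Nontrivial A] (ψ : (I →₀ ℤ) →+ G) (H : AddSubgroup G)
    (hH : H.FiniteIndex) {𝔞 : Ideal (MvPolynomial I A)} (F : Finset (I →₀ ℕ))
    (hFa : ∀ μ ∈ F, monomial μ (1 : A) ∈ 𝔞)
    (hgen : 𝔞 = Ideal.span ((fun μ => monomial μ (1 : A)) '' ↑F)) :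
    ∃ k : ℕ, (mvFloor 𝔞) ^ k ≤
      Ideal.span ((fun ν => monomial ν (1 : A)) ''
        {ν | ∃ μ ∈ Emin 𝔞, ν = mdeg ψ H 𝔞 μ • suppInd μ}) := by
  classical
  have hminex : ∀ μ ∈ F, ∃ ε, ε ∈ Emin 𝔞 ∧ ε ≤ μ := by
    intro μ hμ
    obtain ⟨ε, h1, h2⟩ := exists_emin_le (hFa μ hμ)
    exact ⟨ε, h1, h2⟩
  choose! eps heps1 heps2 using hminex
  set k0 : ℕ := (F.sup fun μ => mdeg ψ H 𝔞 (eps μ)) + 1 with hk0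
  refine ⟨F.card * k0 + 1, ?_⟩
  set BF : Set (MvPolynomial I A) := (fun μ => monomial μ (1 : A)) '' (suppInd '' ↑F) with hBF
  have h1 : mvFloor 𝔞 ≤ Ideal.span BF := by
    rw [mvFloor, Ideal.span_le]
    rintro f ⟨ν, hν, rfl⟩
    rw [hgen, mem_ideal_span_monomial_image] at hν
    obtain ⟨μ, hμF, hμν⟩ := hν ν
      (by rw [MvPolynomial.mem_support_iff, coeff_monomial, if_pos rfl]; exact one_ne_zero)
    exact monomial_mem_of_le (Ideal.subset_span ⟨suppInd μ, ⟨μ, hμF, rfl⟩, rfl⟩)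
      (suppInd_mono hμν)
  have h2 : Ideal.span BF ^ (F.card * k0 + 1) ≤
      Ideal.span ((fun ν => monomial ν (1 : A)) ''
        {ν | ∃ μ ∈ Emin 𝔞, ν = mdeg ψ H 𝔞 μ • suppInd μ}) := by
    rw [ideal_span_pow, Ideal.span_le]
    rintro x hx
    rw [Set.mem_pow] at hx
    obtain ⟨f, hf⟩ := hx
    have hch : ∀ i : Fin (F.card * k0 + 1), ∃ μ ∈ F,
        (f i : MvPolynomial I A) = monomial (suppInd μ) (1 : A) := by
      intro i
      obtain ⟨τ, ⟨μ, hμ, rfl⟩, hcoe⟩ := (f i).2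
      exact ⟨μ, hμ, hcoe.symm⟩
    choose σ hσF hσe using hch
    have hxe : x = monomial (∑ i, suppInd (σ i)) (1 : A) := by
      rw [← hf, List.prod_ofFn]
      calc (∏ i, (f i : MvPolynomial I A)) = ∏ i, monomial (suppInd (σ i)) (1 : A) :=
            Finset.prod_congr rfl (fun i _ => hσe i)
        _ = monomial (∑ i, suppInd (σ i)) 1 := prod_monomial_one _ _
    have hcard : F.card * (k0 - 1) < (Finset.univ (α := Fin (F.card * k0 + 1))).card := by
      rw [Finset.card_univ, Fintype.card_fin]
      have := Nat.mul_le_mul_left F.card (Nat.sub_le k0 1)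
      omega
    obtain ⟨μ0, hμ0F, hfib⟩ :=
      Finset.exists_lt_card_fiber_of_mul_lt_card_of_maps_to (fun i _ => hσF i) hcard
    have hfibcard : k0 ≤ (Finset.univ.filter fun i => σ i = μ0).card := by omega
    have hsum : (mdeg ψ H 𝔞 (eps μ0)) • suppInd (eps μ0) ≤ ∑ i, suppInd (σ i) := by
      have hs1 : (mdeg ψ H 𝔞 (eps μ0)) • suppInd (eps μ0) ≤
          (Finset.univ.filter fun i => σ i = μ0).card • suppInd μ0 := by
        apply smul_le_smul_finsupp
        · have hsup : mdeg ψ H 𝔞 (eps μ0) ≤ F.sup (fun μ => mdeg ψ H 𝔞 (eps μ)) := by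
            simpa using Finset.le_sup (f := fun μ => mdeg ψ H 𝔞 (eps μ)) hμ0F
          omega
        · exact suppInd_mono (heps2 μ0 hμ0F)
      have hs2 : ((Finset.univ.filter fun i => σ i = μ0).card • suppInd μ0 : I →₀ ℕ) =
          ∑ i ∈ Finset.univ.filter (fun i => σ i = μ0), suppInd (σ i) := by
        rw [Finset.sum_congr rfl (fun i hi => by rw [(Finset.mem_filter.1 hi).2]),
          Finset.sum_const]
      have hs3 : (∑ i ∈ Finset.univ.filter (fun i => σ i = μ0), suppInd (σ i)) ≤
          ∑ i, suppInd (σ i) :=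
        Finset.sum_le_sum_of_subset (Finset.filter_subset _ _)
      calc (mdeg ψ H 𝔞 (eps μ0)) • suppInd (eps μ0) ≤ _ := hs1
        _ = _ := hs2
        _ ≤ _ := hs3
    rw [hxe]
    refine monomial_mem_of_le (Ideal.subset_span ?_) hsum
    exact ⟨_, ⟨eps μ0, heps1 μ0 hμ0F, rfl⟩, rfl⟩
  exact le_trans (Ideal.pow_right_mono h1 _) h2

end AuxLemmas

/-- Proposition 2.30: for a finitely generated monomial ideal `𝔞`
of `R = A[(X_i)_{i ∈ I}]` and `H ≤ G` of finite index, the torsion functors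
`Γ_{𝔞_(H)}`, `Γ_{⌊𝔞⌋_H}` and `Γ_{⌊𝔞⌋_(H)}` over `S = R_(H)` coincide. -/
theorem torsion_idealRestrict_eq_torsion_floorH_eq_torsion_floorRestrict
    {A : Type u} [CommRing A] {I : Type v}
    {G : Type w} [AddCommGroup G] (ψ : (I →₀ ℤ) →+ G) (hψ : Function.Surjective ψ)
    (H : AddSubgroup G) (hH : H.FiniteIndex)
    (𝔞 : Ideal (MvPolynomial I A)) (h : IsMonomialIdeal 𝔞) (hfg : 𝔞.FG) :
    ∀ (M : Type (max u v)) [AddCommGroup M] [Module (degRestrict A ψ H) M] (x : M),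
      List.TFAE
        [∃ n : ℕ, (idealRestrict ψ H 𝔞) ^ n ≤ Ideal.torsionOf (degRestrict A ψ H) M x,
          ∃ n : ℕ, (floorH ψ H 𝔞) ^ n ≤ Ideal.torsionOf (degRestrict A ψ H) M x,
          ∃ n : ℕ, (idealRestrict ψ H (mvFloor 𝔞)) ^ n ≤
            Ideal.torsionOf (degRestrict A ψ H) M x] := by
  intro M _ _ x
  rcases subsingleton_or_nontrivial A with hA | hA
  · have hpoly : ∀ p q : MvPolynomial I A, p = q := fun p q => by
      ext m
      exact Subsingleton.elim _ _
    haveI : Subsingleton (degRestrict A ψ H) := ⟨fun a b => Subtype.ext (hpoly _ _)⟩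
    have hall : ∀ 𝔟 𝔠 : Ideal (degRestrict A ψ H), 𝔟 = 𝔠 := by
      intro 𝔟 𝔠
      ext y
      rw [Subsingleton.elim y (0 : degRestrict A ψ H)]
      simp [Submodule.zero_mem]
    rw [hall (idealRestrict ψ H 𝔞) (floorH ψ H 𝔞),
      hall (idealRestrict ψ H (mvFloor 𝔞)) (floorH ψ H 𝔞)]
    tfae_have 1 → 2 := id
    tfae_have 2 → 3 := id
    tfae_have 3 → 1 := id
    tfae_finish
  · obtain ⟨F, hFa, hgen⟩ := exists_finite_gen h hfg
    set 𝔣 : Ideal (MvPolynomial I A) := Ideal.span ((fun ν => monomial ν (1 : A)) ''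
      {ν | ∃ μ ∈ Emin 𝔞, ν = mdeg ψ H 𝔞 μ • suppInd μ}) with h𝔣
    have hfloorH : floorH ψ H 𝔞 = Ideal.comap (degRestrict A ψ H).val 𝔣 :=
      floorH_eq_comap ψ H hH 𝔞
    have hfa : 𝔣 ≤ 𝔞 := by
      rw [h𝔣, Ideal.span_le]
      rintro f ⟨ν, ⟨μ, hμ, rfl⟩, rfl⟩
      exact (mdeg_spec ψ H hH 𝔞 hμ.1).1
    have hafl : 𝔞 ≤ mvFloor 𝔞 := by
      conv_lhs => rw [span_monomials_self h]
      rw [Ideal.span_le]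
      rintro f ⟨μ, hμ, rfl⟩
      exact monomial_mem_of_le (Ideal.subset_span ⟨μ, hμ, rfl⟩) (suppInd_le μ)
    obtain ⟨k, hk⟩ := mvFloor_pow_le ψ H hH F hFa hgen
    have c21 : floorH ψ H 𝔞 ≤ idealRestrict ψ H 𝔞 := by
      rw [hfloorH]
      exact Ideal.comap_mono hfa
    have c13 : idealRestrict ψ H 𝔞 ≤ idealRestrict ψ H (mvFloor 𝔞) := Ideal.comap_mono hafl
    have c32 : (idealRestrict ψ H (mvFloor 𝔞)) ^ k ≤ floorH ψ H 𝔞 := by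
      rw [hfloorH]
      calc (idealRestrict ψ H (mvFloor 𝔞)) ^ k
          ≤ Ideal.comap (degRestrict A ψ H).val ((mvFloor 𝔞) ^ k) := comap_pow_le _ _ _
        _ ≤ Ideal.comap (degRestrict A ψ H).val 𝔣 := Ideal.comap_mono hk
    tfae_have 1 → 2 := torsion_aux 1 (by rw [pow_one]; exact c21)
    tfae_have 2 → 3 := torsion_aux k c32
    tfae_have 3 → 1 := torsion_aux 1 (by rw [pow_one]; exact c13)
    tfae_finish
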